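/- Let X be a nonnegative random variable with cumulative distribution function F and finite second moment E[X²] = ∫₀^∞ 2x(1 − F(x)) dx. Then the weighted cumulative residual entropy of X satisfies 𝓔^w(X) + (1/2)E[X²] = (1/2) Σ_{n=1}^∞ μ^{(2)}_{n+1:n+1}/(n(n+1)), where both sides are equal as values in [0, ∞]. -/

import Mathlib

open MeasureTheory ProbabilityTheory Set
open scoped ENNReal

private lemma telescope_hasSum :
    HasSum (fun n : ℕ => (1 : ℝ) / ((n + 1) * (n + 2))) 1 := by
  have hnn : ∀ n : ℕ, (0 : ℝ) ≤ 1 / ((n + 1) * (n + 2)) := by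
    intro n; positivity
  rw [hasSum_iff_tendsto_nat_of_nonneg hnn]
  have heq : ∀ n : ℕ, (1 : ℝ) / ((n + 1) * (n + 2))
      = (fun k : ℕ => (1 : ℝ) / (k + 1)) n - (fun k : ℕ => (1 : ℝ) / (k + 1)) (n + 1) := by
    intro n
    have h1 : ((n : ℝ) + 1) ≠ 0 := by positivity
    have h2 : ((n : ℝ) + 2) ≠ 0 := by positivity
    have h2' : ((n : ℝ) + 1 + 1) ≠ 0 := by positivity
    simp only [Nat.cast_add, Nat.cast_one]
    rw [div_sub_div _ _ h1 h2']
    rw [div_eq_div_iff (by positivity) (by positivity)]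
    ring
  have : ∀ N : ℕ, ∑ i ∈ Finset.range N, (1 : ℝ) / ((i + 1) * (i + 2))
      = 1 - 1 / (N + 1) := by
    intro N
    calc ∑ i ∈ Finset.range N, (1 : ℝ) / ((i + 1) * (i + 2))
        = ∑ i ∈ Finset.range N,
            ((fun k : ℕ => (1 : ℝ) / (k + 1)) i - (fun k : ℕ => (1 : ℝ) / (k + 1)) (i + 1)) :=
          Finset.sum_congr rfl fun i _ => heq i
      _ = (fun k : ℕ => (1 : ℝ) / (k + 1)) 0 - (fun k : ℕ => (1 : ℝ) / (k + 1)) N :=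
          Finset.sum_range_sub' _ N
      _ = 1 - 1 / (N + 1) := by norm_num
  simp only [this]
  have h0 : Filter.Tendsto (fun N : ℕ => (1 : ℝ) / (N + 1)) Filter.atTop (nhds 0) :=
    tendsto_one_div_add_atTop_nhds_zero_nat
  simpa using (tendsto_const_nhds (x := (1 : ℝ))).sub h0

private lemma key_hasSum {p : ℝ} (hp0 : 0 ≤ p) (hp1 : p ≤ 1) :
    HasSum (fun n : ℕ => (1 - p ^ (n + 2)) / ((n + 1) * (n + 2)))
      ((1 - p) - (1 - p) * Real.log (1 - p)) := by
  rcases eq_or_lt_of_le hp1 with h1 | h1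
  · subst h1
    simpa using hasSum_zero
  · have habs : |p| < 1 := abs_lt.mpr ⟨by linarith, h1⟩
    have hL : HasSum (fun n : ℕ => p ^ (n + 1) / (n + 1)) (-Real.log (1 - p)) :=
      Real.hasSum_pow_div_log_of_abs_lt_one habs
    set L := -Real.log (1 - p) with hLdef
    -- shifted series: ∑ p^(n+2)/(n+2) = L - p
    have h2 : HasSum (fun n : ℕ => p ^ (n + 2) / (n + 2)) (L - p) := by
      have h'' := (hasSum_nat_add_iff (f := fun n : ℕ => p ^ (n + 1) / ((n : ℝ) + 1)) 1
        (g := L - p)).mpr (by convert hL using 1; rfl; simp)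
      convert h'' using 2 with n
      rfl
      push_cast; ring_nf
    -- ∑ p^(n+2)/(n+1) = p * L
    have h3 : HasSum (fun n : ℕ => p ^ (n + 2) / (n + 1)) (p * L) := by
      have := hL.mul_left p
      convert this using 2 with n
      rfl
      rw [mul_div_assoc']
      ring_nf
    have h4 : HasSum (fun n : ℕ => p ^ (n + 2) / ((n + 1) * (n + 2)))
        (p * L - (L - p)) := by
      have := h3.sub h2
      convert this using 2 with n
      rfl
      have hn1 : ((n : ℝ) + 1) ≠ 0 := by positivity
      have hn2 : ((n : ℝ) + 2) ≠ 0 := by positivity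
      field_simp
      ring
    have hts := telescope_hasSum.sub h4
    have hfun : (fun n : ℕ => (1 - p ^ (n + 2)) / (((n : ℝ) + 1) * ((n : ℝ) + 2)))
        = fun n : ℕ => 1 / (((n : ℝ) + 1) * ((n : ℝ) + 2))
            - p ^ (n + 2) / (((n : ℝ) + 1) * ((n : ℝ) + 2)) := by
      funext n; rw [sub_div]
    have hval : (1 - p) - (1 - p) * Real.log (1 - p) = 1 - (p * L - (L - p)) := by
      rw [hLdef]; ring
    rw [hval, hfun]
    exact hts

private lemma pointwise_eq {x p : ℝ} (hx : 0 < x) (hp0 : 0 ≤ p) (hp1 : p ≤ 1) :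
    ENNReal.ofReal (-(x * (1 - p) * Real.log (1 - p)))
      + 2⁻¹ * ENNReal.ofReal (2 * x * (1 - p))
    = 2⁻¹ * ∑' n : ℕ,
        (((n : ℝ≥0∞) + 1) * ((n : ℝ≥0∞) + 2))⁻¹
          * ENNReal.ofReal (2 * x * (1 - p ^ (n + 2))) := by
  have hlog : Real.log (1 - p) ≤ 0 := Real.log_nonpos (by linarith) (by linarith)
  have h1p : (0 : ℝ) ≤ 1 - p := by linarith
  set S : ℝ := (1 - p) - (1 - p) * Real.log (1 - p) with hS
  have hSnn : 0 ≤ S := by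
    have : 0 ≤ -((1 - p) * Real.log (1 - p)) := by
      rw [neg_nonneg]; exact mul_nonpos_of_nonneg_of_nonpos h1p hlog
    rw [hS]; linarith
  have hsum : HasSum (fun n : ℕ => 2 * x * ((1 - p ^ (n + 2)) / ((n + 1) * (n + 2))))
      (2 * x * S) := (key_hasSum hp0 hp1).mul_left (2 * x)
  -- rewrite each ENNReal term
  have hterm : ∀ n : ℕ,
      (((n : ℝ≥0∞) + 1) * ((n : ℝ≥0∞) + 2))⁻¹
        * ENNReal.ofReal (2 * x * (1 - p ^ (n + 2)))
      = ENNReal.ofReal (2 * x * ((1 - p ^ (n + 2)) / (((n : ℝ) + 1) * ((n : ℝ) + 2)))) := by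
    intro n
    have hpos : (0 : ℝ) < ((n : ℝ) + 1) * ((n : ℝ) + 2) := by positivity
    have hcast : (((n : ℝ≥0∞) + 1) * ((n : ℝ≥0∞) + 2))
        = ENNReal.ofReal (((n : ℝ) + 1) * ((n : ℝ) + 2)) := by
      rw [ENNReal.ofReal_mul (by positivity)]
      congr 1 <;>
        rw [ENNReal.ofReal_add (by positivity) (by norm_num), ENNReal.ofReal_natCast] <;>
        norm_num
    rw [show 2 * x * ((1 - p ^ (n + 2)) / (((n : ℝ) + 1) * ((n : ℝ) + 2)))
        = (2 * x * (1 - p ^ (n + 2))) / (((n : ℝ) + 1) * ((n : ℝ) + 2)) by ring,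
      ENNReal.ofReal_div_of_pos hpos, hcast, ENNReal.div_eq_inv_mul]
  have hnn : ∀ n : ℕ, 0 ≤ 2 * x * ((1 - p ^ (n + 2)) / (((n : ℝ) + 1) * ((n : ℝ) + 2))) := by
    intro n
    have : p ^ (n + 2) ≤ 1 := pow_le_one₀ hp0 hp1
    have h1 : (0 : ℝ) ≤ 1 - p ^ (n + 2) := by linarith
    positivity
  have htsum : ∑' n : ℕ,
      (((n : ℝ≥0∞) + 1) * ((n : ℝ≥0∞) + 2))⁻¹
        * ENNReal.ofReal (2 * x * (1 - p ^ (n + 2)))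
      = ENNReal.ofReal (2 * x * S) := by
    simp_rw [hterm]
    rw [← ENNReal.ofReal_tsum_of_nonneg hnn hsum.summable, hsum.tsum_eq]
  rw [htsum]
  have half_ofReal : ∀ a : ℝ, (2⁻¹ : ℝ≥0∞) * ENNReal.ofReal (2 * a) = ENNReal.ofReal a := by
    intro a
    rcases le_or_gt 0 a with ha | ha
    · rw [ENNReal.ofReal_mul (by norm_num : (0:ℝ) ≤ 2), ← mul_assoc,
        show ENNReal.ofReal 2 = 2 from by norm_num,
        ENNReal.inv_mul_cancel two_ne_zero ENNReal.ofNat_ne_top, one_mul]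
    · rw [ENNReal.ofReal_of_nonpos (by linarith), ENNReal.ofReal_of_nonpos (by linarith)]
      simp
  have hA : 0 ≤ -(x * (1 - p) * Real.log (1 - p)) := by
    rw [neg_nonneg]
    exact mul_nonpos_of_nonneg_of_nonpos (mul_nonneg hx.le h1p) hlog
  rw [show 2 * x * S = 2 * (x * S) by ring, half_ofReal,
    show 2 * x * (1 - p) = 2 * (x * (1 - p)) by ring, half_ofReal,
    ← ENNReal.ofReal_add hA (mul_nonneg hx.le h1p)]
  congr 1
  rw [hS]; ring

/-- For a nonnegative random variable with cdf `F = cdf μ` and finite second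
moment `E[X²] = ∫₀^∞ 2x (1 - F x) dx`, the weighted cumulative residual entropy
`𝓔^w(X) = ∫₀^∞ -x (1 - F x) log (1 - F x) dx` satisfies
`𝓔^w(X) + (1/2) E[X²] = (1/2) ∑_{n=1}^∞ μ^{(2)}_{n+1:n+1} / (n (n+1))` as values in `[0, ∞]`,
where `μ^{(2)}_{m:m} = ∫₀^∞ 2x (1 - (F x)^m) dx` is the second moment of the largest order
statistic. -/
theorem wcre_add_half_second_moment_eq_half_tsum_max_order_stats
    (μ : Measure ℝ) [IsProbabilityMeasure μ] (hnonneg : μ (Set.Iio 0) = 0)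
    (hmom2 : ∫⁻ x in Set.Ioi (0 : ℝ), ENNReal.ofReal (2 * x * (1 - cdf μ x)) ≠ ⊤) :
    (∫⁻ x in Set.Ioi (0 : ℝ),
        ENNReal.ofReal (-(x * (1 - cdf μ x) * Real.log (1 - cdf μ x))))
      + (∫⁻ x in Set.Ioi (0 : ℝ), ENNReal.ofReal (2 * x * (1 - cdf μ x))) / 2
    = (∑' n : ℕ,
        (∫⁻ x in Set.Ioi (0 : ℝ), ENNReal.ofReal (2 * x * (1 - (cdf μ x) ^ (n + 2))))
          / (((n : ℝ≥0∞) + 1) * ((n : ℝ≥0∞) + 2))) / 2 := by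
  have hF : Measurable (cdf μ) := (cdf μ).mono.measurable
  have hmeasn : ∀ n : ℕ,
      Measurable (fun x : ℝ => ENNReal.ofReal (2 * x * (1 - (cdf μ x) ^ (n + 2)))) := by
    intro n
    apply ENNReal.measurable_ofReal.comp
    exact ((measurable_const.mul measurable_id).mul
      (measurable_const.sub (hF.pow_const _)))
  have hmeasA : Measurable (fun x : ℝ =>
      ENNReal.ofReal (-(x * (1 - cdf μ x) * Real.log (1 - cdf μ x)))) := by
    apply ENNReal.measurable_ofReal.comp
    apply Measurable.neg
    exact (measurable_id.mul (measurable_const.sub hF)).mul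
      (Real.measurable_log.comp (measurable_const.sub hF))
  have hc_ne_top : ∀ n : ℕ, (((n : ℝ≥0∞) + 1) * ((n : ℝ≥0∞) + 2))⁻¹ ≠ ⊤ := by
    intro n
    simp [ENNReal.inv_ne_top]
  -- rewrite RHS: pull constants inside and swap tsum/integral
  have hRHS : (∑' n : ℕ,
        (∫⁻ x in Set.Ioi (0 : ℝ), ENNReal.ofReal (2 * x * (1 - (cdf μ x) ^ (n + 2))))
          / (((n : ℝ≥0∞) + 1) * ((n : ℝ≥0∞) + 2)))
      = ∫⁻ x in Set.Ioi (0 : ℝ), ∑' n : ℕ,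
          (((n : ℝ≥0∞) + 1) * ((n : ℝ≥0∞) + 2))⁻¹
            * ENNReal.ofReal (2 * x * (1 - (cdf μ x) ^ (n + 2))) := by
    have hterm : ∀ n : ℕ,
        (∫⁻ x in Set.Ioi (0 : ℝ), ENNReal.ofReal (2 * x * (1 - (cdf μ x) ^ (n + 2))))
            / (((n : ℝ≥0∞) + 1) * ((n : ℝ≥0∞) + 2))
          = ∫⁻ x in Set.Ioi (0 : ℝ),
              (((n : ℝ≥0∞) + 1) * ((n : ℝ≥0∞) + 2))⁻¹
                * ENNReal.ofReal (2 * x * (1 - (cdf μ x) ^ (n + 2))) := by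
      intro n
      rw [ENNReal.div_eq_inv_mul, ← lintegral_const_mul' _ _ (hc_ne_top n)]
    simp_rw [hterm]
    rw [← lintegral_tsum (fun n => (Measurable.const_mul (hmeasn n) _).aemeasurable)]
  rw [hRHS]
  rw [ENNReal.div_eq_inv_mul, ← lintegral_const_mul' _ _ (by norm_num : (2:ℝ≥0∞)⁻¹ ≠ ⊤),
    ENNReal.div_eq_inv_mul, ← lintegral_const_mul' _ _ (by norm_num : (2:ℝ≥0∞)⁻¹ ≠ ⊤),
    ← lintegral_add_left hmeasA]
  refine setLIntegral_congr_fun measurableSet_Ioi (fun x hx => ?_)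
  exact pointwise_eq hx (cdf_nonneg μ x) (cdf_le_one μ x)
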